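/- Let T : I → I be a symmetric interval exchange transformation. If T has a connection that does not contain any point from the set {c_α : α ∈ 𝒜 ∪ {1/2}}, then T is not ergodic with respect to Lebesgue measure on I. -/
import Mathlib


open MeasureTheory Set
open scoped Classical

/-- An interval exchange transformation (IET) on the interval `[a, b)`:
an alphabet `Fin d`, bijections `perm0`, `perm1 : Fin d ≃ Fin d` describing the order of
the exchanged intervals before and after applying the map, and a positive length vector
`len` summing up to `b - a`.  The permutation datum is assumed non-reducible. -/
structure IET where
  d : ℕ
  hd : 0 < d
  a : ℝ
  b : ℝ
  hab : a < b
  perm0 : Fin d ≃ Fin d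
  perm1 : Fin d ≃ Fin d
  len : Fin d → ℝ
  len_pos : ∀ α, 0 < len α
  len_sum : ∑ α, len α = b - a
  irred : ∀ k : ℕ, 0 < k → k < d → ¬ (∀ α, (perm0 α : ℕ) < k ↔ (perm1 α : ℕ) < k)

namespace IET

variable (T : IET)

/-- The left endpoint `∂I_α` of the exchanged interval `I_α`. -/
noncomputable def lep (α : Fin T.d) : ℝ :=
  T.a + ∑ β ∈ Finset.univ.filter (fun β => T.perm0 β < T.perm0 α), T.len β

/-- The left endpoint of the image interval `T(I_α)`. -/
noncomputable def lepImg (α : Fin T.d) : ℝ :=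
  T.a + ∑ β ∈ Finset.univ.filter (fun β => T.perm1 β < T.perm1 α), T.len β

/-- The translation amount on `I_α`. -/
noncomputable def transl (α : Fin T.d) : ℝ := T.lepImg α - T.lep α

/-- The exchanged interval `I_α`. -/
noncomputable def interval (α : Fin T.d) : Set ℝ :=
  Set.Ico (T.lep α) (T.lep α + T.len α)

/-- The image interval `T(I_α)`. -/
noncomputable def intervalImg (α : Fin T.d) : Set ℝ :=
  Set.Ico (T.lepImg α) (T.lepImg α + T.len α)

/-- The IET as a self-map of `ℝ`: it translates each `I_α` onto its image and is
the identity outside `[a, b)`. -/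
noncomputable def toFun (x : ℝ) : ℝ :=
  x + ∑ α, if x ∈ T.interval α then T.transl α else 0

/-- The inverse IET `T⁻¹` as a self-map of `ℝ`. -/
noncomputable def invFun (x : ℝ) : ℝ :=
  x + ∑ α, if x ∈ T.intervalImg α then -T.transl α else 0

/-- The iterate `T^n`, `n : ℤ` (negative iterates via `invFun`). -/
noncomputable def iter (n : ℤ) (x : ℝ) : ℝ :=
  if 0 ≤ n then T.toFun^[n.toNat] x else T.invFun^[(-n).toNat] x

/-- `M(β) = min {n ≥ 1 | T^{-n}(∂I_β) = ∂I_α for some α with π₁ α ≠ 1}`, with the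
convention `M(π₀⁻¹ 1) = 1`, and `∞` if no such `n` exists. -/
noncomputable def M (β : Fin T.d) : ℕ∞ :=
  if (T.perm0 β : ℕ) = 0 then 1
  else sInf {e : ℕ∞ | ∃ n : ℕ, e = (n : ℕ∞) ∧ 1 ≤ n ∧
    ∃ α : Fin T.d, (T.perm1 α : ℕ) ≠ 0 ∧ T.invFun^[n] (T.lep β) = T.lep α}

/-- `N(β) = min {n ≥ 1 | T^{n}(∂I_β) = ∂I_α for some α with π₀ α ≠ 1}`, with the
convention `N(π₁⁻¹ 1) = 1`, and `∞` if no such `n` exists. -/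
noncomputable def N (β : Fin T.d) : ℕ∞ :=
  if (T.perm1 β : ℕ) = 0 then 1
  else sInf {e : ℕ∞ | ∃ n : ℕ, e = (n : ℕ∞) ∧ 1 ≤ n ∧
    ∃ α : Fin T.d, (T.perm0 α : ℕ) ≠ 0 ∧ T.toFun^[n] (T.lep β) = T.lep α}

/-- `s` is a (non-trivial) connection of `T`: the orbit segment
`{T^{-k}(∂I_β) | 0 ≤ k ≤ n}` where `π₀ β ≠ 1`, `π₁ α ≠ 1`, `n ≥ 1` and
`T^{-n}(∂I_β) = ∂I_α`. -/
def IsConnection (s : Set ℝ) : Prop :=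
  ∃ (β α : Fin T.d) (n : ℕ), (T.perm0 β : ℕ) ≠ 0 ∧ (T.perm1 α : ℕ) ≠ 0 ∧ 1 ≤ n ∧
    T.invFun^[n] (T.lep β) = T.lep α ∧
    s = (fun k : ℕ => T.invFun^[k] (T.lep β)) '' {k : ℕ | k ≤ n}

/-- `T` is symmetric: `π₁ ∘ π₀⁻¹ (i) = d + 1 - i` (here with `Fin d` indexing:
`perm1 α + perm0 α + 1 = d`). -/
def IsSymm : Prop := ∀ α, (T.perm1 α : ℕ) + (T.perm0 α : ℕ) + 1 = T.d

/-- The midpoint `c_α` of the exchanged interval `I_α`. -/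
noncomputable def center (α : Fin T.d) : ℝ := T.lep α + T.len α / 2

/-- The midpoint `c_{1/2}` of the interval `I = [a, b)`. -/
noncomputable def centerHalf : ℝ := (T.a + T.b) / 2

/-- Midpoints indexed by `𝒜 ∪ {1/2}`; `none` plays the role of `1/2`. -/
noncomputable def centerOpt (β : Option (Fin T.d)) : ℝ :=
  match β with
  | none => T.centerHalf
  | some α => T.center α

/-- `δ_{1/2}`. -/
def deltaHalf (β : Option (Fin T.d)) : ℕ :=
  match β with
  | none => 1
  | some _ => 0

/-- The symmetric reflection `𝓘_I (x) = a + b - x` of `I = [a, b)`. -/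
noncomputable def refl (x : ℝ) : ℝ := T.a + T.b - x

/-- The first return time `r_J(x) = min {n ≥ 1 | T^n x ∈ J}`. -/
noncomputable def returnTime (J : Set ℝ) (x : ℝ) : ℕ :=
  sInf {n : ℕ | 1 ≤ n ∧ T.toFun^[n] x ∈ J}

/-- The first return map `T_J`. -/
noncomputable def firstReturn (J : Set ℝ) (x : ℝ) : ℝ := T.toFun^[T.returnTime J x] x

/-- The first backward return time `b_J(x) = min {n ≥ 1 | T^{-n} x ∈ J}`. -/
noncomputable def backTime (J : Set ℝ) (x : ℝ) : ℕ :=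
  sInf {n : ℕ | 1 ≤ n ∧ T.invFun^[n] x ∈ J}

/-- The first backward return map `p_J` (the inverse of the first return map `T_J`). -/
noncomputable def backReturn (J : Set ℝ) (x : ℝ) : ℝ := T.invFun^[T.backTime J x] x

/-- `m_{J,α} = inf {n ≥ 0 | T^{-n}(∂I_α) ∈ interior J}`. -/
noncomputable def mJ (J : Set ℝ) (α : Fin T.d) : ℕ :=
  sInf {n : ℕ | T.invFun^[n] (T.lep α) ∈ interior J}

/-- `J` is of form (★): a subinterval `[a_J, b_J) ⊆ I` whose endpoints are iterates
`T^{m₀}(∂I_{α_J})`, `T^{n₀}(∂I_{β_J})` of left endpoints which do not visit `J` at any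
earlier time between `0` and `m₀` (resp. `n₀`). -/
def IsStarForm (J : Set ℝ) : Prop :=
  ∃ (aJ bJ : ℝ) (αJ βJ : Fin T.d) (m₀ n₀ : ℤ),
    aJ < bJ ∧ J = Set.Ico aJ bJ ∧ J ⊆ Set.Ico T.a T.b ∧
    aJ = T.iter m₀ (T.lep αJ) ∧ bJ = T.iter n₀ (T.lep βJ) ∧
    (∀ m : ℤ, (0 ≤ m ∧ m ≤ m₀ ∨ m₀ ≤ m ∧ m ≤ 0) → m ≠ m₀ → T.iter m (T.lep αJ) ∉ J) ∧
    (∀ n : ℤ, (0 ≤ n ∧ n ≤ n₀ ∨ n₀ ≤ n ∧ n ≤ 0) → n ≠ n₀ → T.iter n (T.lep βJ) ∉ J)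

/-- `J` is a `β`-symmetric interval (`β : Option (Fin T.d)`, `none` = `1/2`-symmetric):
`J = [c_β - Δ, c_β + Δ)` with `Δ > 0`, contained in `I_β` (resp. in `I`). -/
def IsSymmetricInterval (J : Set ℝ) (β : Option (Fin T.d)) : Prop :=
  ∃ Δ : ℝ, 0 < Δ ∧ J = Set.Ico (T.centerOpt β - Δ) (T.centerOpt β + Δ) ∧
    (match β with
      | some γ => J ⊆ T.interval γ
      | none => J ⊆ Set.Ico T.a T.b)

/-- `x` is a left endpoint of one of the intervals exchanged by the first return map
`T_J`, where `J = [aJ, bJ)`: either `x = aJ`, or the forward orbit of `x` before its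
first return to `J` meets a left endpoint `∂I_α` of `T` or the right endpoint `bJ`. -/
def IsExchLeftEndpoint (J : Set ℝ) (aJ bJ : ℝ) (x : ℝ) : Prop :=
  x = aJ ∨ ∃ k : ℕ, k < T.returnTime J x ∧
    ((∃ α : Fin T.d, T.toFun^[k] x = T.lep α) ∨ (1 ≤ k ∧ T.toFun^[k] x = bJ))

/-- A Rokhlin tower decomposition of `I = [a, b)` over `J = [aJ, bJ)` associated with the
first return map `T_J`: the bases `[base γ, base γ + blen γ)` partition `J`, the return
time on the base `γ` is constantly `h γ`, each `T^i` (`i ≤ h γ`) acts as a translation on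
the base `γ`, and the tower levels `T^i([base γ, base γ + blen γ))`, `i < h γ`, are
pairwise disjoint and partition `I`. -/
def IsTowerDecomp (aJ bJ : ℝ) {k : ℕ} (base blen : Fin k → ℝ) (h : Fin k → ℕ) : Prop :=
  (∀ γ, 0 < blen γ) ∧ (∀ γ, 1 ≤ h γ) ∧
  Pairwise (Function.onFun Disjoint fun γ => Set.Ico (base γ) (base γ + blen γ)) ∧
  (⋃ γ, Set.Ico (base γ) (base γ + blen γ)) = Set.Ico aJ bJ ∧
  (∀ γ, ∀ i ≤ h γ, ∀ x ∈ Set.Ico (base γ) (base γ + blen γ),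
    T.toFun^[i] x - T.toFun^[i] (base γ) = x - base γ) ∧
  (∀ γ, ∀ x ∈ Set.Ico (base γ) (base γ + blen γ), T.returnTime (Set.Ico aJ bJ) x = h γ) ∧
  (⋃ γ, ⋃ i ∈ Finset.range (h γ), T.toFun^[i] '' Set.Ico (base γ) (base γ + blen γ))
    = Set.Ico T.a T.b ∧
  (∀ γ γ' : Fin k, ∀ i i' : ℕ, i < h γ → i' < h γ' → (γ, i) ≠ (γ', i') →
    Disjoint (T.toFun^[i] '' Set.Ico (base γ) (base γ + blen γ))
      (T.toFun^[i'] '' Set.Ico (base γ') (base γ' + blen γ')))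

/-- Replace the length data of an IET, keeping the combinatorial data. -/
noncomputable abbrev replaceLen (len' : Fin T.d → ℝ) (h1 : ∀ α, 0 < len' α)
    (h2 : ∑ α, len' α = T.b - T.a) : IET :=
  { T with len := len', len_pos := h1, len_sum := h2 }

end IET

open IET
namespace IET

variable (T : IET)

/-- Cumulative length function for the ordering given by a permutation `p`. -/
noncomputable def sP (p : Fin T.d ≃ Fin T.d) (j : ℕ) : ℝ :=
  T.a + ∑ β ∈ Finset.univ.filter (fun β => (p β : ℕ) < j), T.len β

variable {T}

lemma sP_zero (p : Fin T.d ≃ Fin T.d) : T.sP p 0 = T.a := by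
  simp [sP]

lemma sP_mono (p : Fin T.d ≃ Fin T.d) {j k : ℕ} (h : j ≤ k) : T.sP p j ≤ T.sP p k := by
  unfold sP
  have hsub : Finset.univ.filter (fun β => ((p β : ℕ) < j)) ⊆
      Finset.univ.filter (fun β => ((p β : ℕ) < k)) := by
    intro β hb
    simp only [Finset.mem_filter, Finset.mem_univ, true_and] at hb ⊢
    omega
  have := Finset.sum_le_sum_of_subset_of_nonneg hsub
    (fun i _ _ => (T.len_pos i).le)
  linarith

lemma sP_top (p : Fin T.d ≃ Fin T.d) {j : ℕ} (h : T.d ≤ j) : T.sP p j = T.b := by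
  unfold sP
  have hfil : Finset.univ.filter (fun β => ((p β : ℕ) < j)) = Finset.univ := by
    ext β
    simp only [Finset.mem_filter, Finset.mem_univ, true_and, iff_true]
    exact lt_of_lt_of_le (p β).isLt h
  rw [hfil]
  have := T.len_sum
  linarith

lemma sP_succ (p : Fin T.d ≃ Fin T.d) (γ : Fin T.d) :
    T.sP p ((p γ : ℕ) + 1) = T.sP p (p γ : ℕ) + T.len γ := by
  unfold sP
  have hfil : Finset.univ.filter (fun β => ((p β : ℕ) < (p γ : ℕ) + 1)) =
      insert γ (Finset.univ.filter (fun β => ((p β : ℕ) < (p γ : ℕ)))) := by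
    ext β
    simp only [Finset.mem_filter, Finset.mem_univ, true_and, Finset.mem_insert]
    constructor
    · intro hb
      rcases Nat.lt_succ_iff_lt_or_eq.mp hb with h | h
      · exact Or.inr h
      · left
        have : p β = p γ := Fin.ext h
        exact p.injective this
    · rintro (rfl | h)
      · omega
      · omega
  rw [hfil, Finset.sum_insert (by simp)]
  ring

lemma sP_le_b (p : Fin T.d ≃ Fin T.d) (j : ℕ) : T.sP p j ≤ T.b := by
  rcases le_total j T.d with h | h
  · calc T.sP p j ≤ T.sP p T.d := sP_mono p h
      _ = T.b := sP_top p le_rfl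
  · exact le_of_eq (sP_top p h)

lemma a_le_sP (p : Fin T.d ≃ Fin T.d) (j : ℕ) : T.a ≤ T.sP p j := by
  calc T.a = T.sP p 0 := (sP_zero p).symm
    _ ≤ T.sP p j := sP_mono p (Nat.zero_le j)

/-- Existence of the piece containing a given point. -/
lemma exists_piece (p : Fin T.d ≃ Fin T.d) {x : ℝ} (hx : x ∈ Set.Ico T.a T.b) :
    ∃ γ, T.sP p (p γ : ℕ) ≤ x ∧ x < T.sP p (p γ : ℕ) + T.len γ := by
  classical
  set J : Finset ℕ := (Finset.range T.d).filter (fun j => T.sP p j ≤ x) with hJ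
  have h0J : 0 ∈ J := by
    simp only [hJ, Finset.mem_filter, Finset.mem_range]
    exact ⟨T.hd, by rw [sP_zero]; exact hx.1⟩
  have hJne : J.Nonempty := ⟨0, h0J⟩
  set j := J.max' hJne with hj
  have hjJ : j ∈ J := J.max'_mem hJne
  have hjd : j < T.d := by
    have := hjJ
    simp only [hJ, Finset.mem_filter, Finset.mem_range] at this
    exact this.1
  have hjle : T.sP p j ≤ x := by
    have := hjJ
    simp only [hJ, Finset.mem_filter, Finset.mem_range] at this
    exact this.2
  refine ⟨p.symm ⟨j, hjd⟩, ?_, ?_⟩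
  · simpa using hjle
  · have hval : (p (p.symm ⟨j, hjd⟩) : ℕ) = j := by simp
    rw [hval]
    have hsucc : T.sP p (j + 1) = T.sP p j + T.len (p.symm ⟨j, hjd⟩) := by
      have := sP_succ p (p.symm ⟨j, hjd⟩)
      rwa [hval] at this
    by_contra hcon
    push_neg at hcon
    rw [← hsucc] at hcon
    rcases Nat.lt_or_ge (j+1) T.d with hlt | hge
    · have : j + 1 ∈ J := by
        simp only [hJ, Finset.mem_filter, Finset.mem_range]
        exact ⟨hlt, hcon⟩
      have := J.le_max' _ this
      omega
    · have : T.sP p (j+1) = T.b := sP_top p hge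
      rw [this] at hcon
      exact absurd hx.2 (not_lt.mpr hcon)

/-- Uniqueness of the piece. -/
lemma piece_unique (p : Fin T.d ≃ Fin T.d) {x : ℝ} {γ γ' : Fin T.d}
    (h : T.sP p (p γ : ℕ) ≤ x ∧ x < T.sP p (p γ : ℕ) + T.len γ)
    (h' : T.sP p (p γ' : ℕ) ≤ x ∧ x < T.sP p (p γ' : ℕ) + T.len γ') : γ = γ' := by
  rcases lt_trichotomy ((p γ : ℕ)) ((p γ' : ℕ)) with hlt | heq | hgt
  · exfalso
    have h1 : T.sP p ((p γ : ℕ) + 1) ≤ T.sP p (p γ' : ℕ) := sP_mono p hlt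
    rw [sP_succ] at h1
    linarith [h.2, h'.1]
  · exact p.injective (Fin.ext heq)
  · exfalso
    have h1 : T.sP p ((p γ' : ℕ) + 1) ≤ T.sP p (p γ : ℕ) := sP_mono p hgt
    rw [sP_succ] at h1
    linarith [h'.2, h.1]

lemma lep_eq_sP (γ : Fin T.d) : T.lep γ = T.sP T.perm0 (T.perm0 γ : ℕ) := by
  rfl

lemma lepImg_eq_sP (γ : Fin T.d) : T.lepImg γ = T.sP T.perm1 (T.perm1 γ : ℕ) := by
  rfl

lemma mem_interval_iff {x : ℝ} {γ : Fin T.d} :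
    x ∈ T.interval γ ↔ T.lep γ ≤ x ∧ x < T.lep γ + T.len γ := Set.mem_Ico

lemma exists_interval {x : ℝ} (hx : x ∈ Set.Ico T.a T.b) : ∃ γ, x ∈ T.interval γ := by
  obtain ⟨γ, h1, h2⟩ := exists_piece T.perm0 hx
  exact ⟨γ, by rw [mem_interval_iff, lep_eq_sP]; exact ⟨h1, h2⟩⟩

lemma interval_unique {x : ℝ} {γ γ' : Fin T.d} (h : x ∈ T.interval γ)
    (h' : x ∈ T.interval γ') : γ = γ' := by
  rw [mem_interval_iff, lep_eq_sP] at h h'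
  exact piece_unique T.perm0 h h'

lemma exists_intervalImg {x : ℝ} (hx : x ∈ Set.Ico T.a T.b) : ∃ γ, x ∈ T.intervalImg γ := by
  obtain ⟨γ, h1, h2⟩ := exists_piece T.perm1 hx
  exact ⟨γ, by rw [intervalImg, Set.mem_Ico, lepImg_eq_sP]; exact ⟨h1, h2⟩⟩

lemma intervalImg_unique {x : ℝ} {γ γ' : Fin T.d} (h : x ∈ T.intervalImg γ)
    (h' : x ∈ T.intervalImg γ') : γ = γ' := by
  rw [intervalImg, Set.mem_Ico, lepImg_eq_sP] at h h'
  exact piece_unique T.perm1 h h'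

end IET
namespace IET

variable {T : IET}

lemma lep_add_len_eq (γ : Fin T.d) :
    T.lep γ + T.len γ = T.sP T.perm0 ((T.perm0 γ : ℕ) + 1) := by
  rw [lep_eq_sP, sP_succ]

lemma lepImg_add_len_eq (γ : Fin T.d) :
    T.lepImg γ + T.len γ = T.sP T.perm1 ((T.perm1 γ : ℕ) + 1) := by
  rw [lepImg_eq_sP, sP_succ]

lemma interval_subset (γ : Fin T.d) : T.interval γ ⊆ Set.Ico T.a T.b := by
  intro x hx
  rw [mem_interval_iff] at hx
  constructor
  · calc T.a ≤ T.lep γ := by rw [lep_eq_sP]; exact a_le_sP _ _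
      _ ≤ x := hx.1
  · calc x < T.lep γ + T.len γ := hx.2
      _ = T.sP T.perm0 ((T.perm0 γ : ℕ) + 1) := lep_add_len_eq γ
      _ ≤ T.b := sP_le_b _ _

lemma intervalImg_subset (γ : Fin T.d) : T.intervalImg γ ⊆ Set.Ico T.a T.b := by
  intro x hx
  rw [intervalImg, Set.mem_Ico] at hx
  constructor
  · calc T.a ≤ T.lepImg γ := by rw [lepImg_eq_sP]; exact a_le_sP _ _
      _ ≤ x := hx.1
  · calc x < T.lepImg γ + T.len γ := hx.2
      _ = T.sP T.perm1 ((T.perm1 γ : ℕ) + 1) := lepImg_add_len_eq γ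
      _ ≤ T.b := sP_le_b _ _

lemma lep_mem (γ : Fin T.d) : T.lep γ ∈ T.interval γ := by
  rw [mem_interval_iff]
  exact ⟨le_refl _, by linarith [T.len_pos γ]⟩

lemma lepImg_mem (γ : Fin T.d) : T.lepImg γ ∈ T.intervalImg γ := by
  rw [intervalImg, Set.mem_Ico]
  exact ⟨le_refl _, by linarith [T.len_pos γ]⟩

lemma toFun_apply {x : ℝ} {γ : Fin T.d} (hx : x ∈ T.interval γ) :
    T.toFun x = x - T.lep γ + T.lepImg γ := by
  unfold toFun
  have hsum : ∑ α, (if x ∈ T.interval α then T.transl α else 0)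
      = (if x ∈ T.interval γ then T.transl γ else 0) := by
    apply Finset.sum_eq_single γ
    · intro α _ hne
      have : x ∉ T.interval α := fun hmem => hne (interval_unique hmem hx)
      simp [this]
    · intro h
      exact absurd (Finset.mem_univ γ) h
  rw [hsum, if_pos hx]
  unfold transl
  ring

lemma invFun_apply {x : ℝ} {γ : Fin T.d} (hx : x ∈ T.intervalImg γ) :
    T.invFun x = x - T.lepImg γ + T.lep γ := by
  unfold invFun
  have hsum : ∑ α, (if x ∈ T.intervalImg α then -T.transl α else 0)
      = (if x ∈ T.intervalImg γ then -T.transl γ else 0) := by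
    apply Finset.sum_eq_single γ
    · intro α _ hne
      have : x ∉ T.intervalImg α := fun hmem => hne (intervalImg_unique hmem hx)
      simp [this]
    · intro h
      exact absurd (Finset.mem_univ γ) h
  rw [hsum, if_pos hx]
  unfold transl
  ring

lemma toFun_eq_self {x : ℝ} (hx : x ∉ Set.Ico T.a T.b) : T.toFun x = x := by
  unfold toFun
  have hsum : ∑ α, (if x ∈ T.interval α then T.transl α else 0) = 0 := by
    apply Finset.sum_eq_zero
    intro α _
    have : x ∉ T.interval α := fun hmem => hx (interval_subset α hmem)
    simp [this]
  rw [hsum, add_zero]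

lemma toFun_mem_intervalImg {x : ℝ} {γ : Fin T.d} (hx : x ∈ T.interval γ) :
    T.toFun x ∈ T.intervalImg γ := by
  rw [toFun_apply hx]
  rw [mem_interval_iff] at hx
  rw [intervalImg, Set.mem_Ico]
  constructor <;> [linarith [hx.1]; linarith [hx.2]]

lemma invFun_mem_interval {x : ℝ} {γ : Fin T.d} (hx : x ∈ T.intervalImg γ) :
    T.invFun x ∈ T.interval γ := by
  rw [invFun_apply hx]
  rw [intervalImg, Set.mem_Ico] at hx
  rw [mem_interval_iff]
  constructor <;> [linarith [hx.1]; linarith [hx.2]]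

lemma toFun_mem_Ico {x : ℝ} (hx : x ∈ Set.Ico T.a T.b) : T.toFun x ∈ Set.Ico T.a T.b := by
  obtain ⟨γ, hγ⟩ := exists_interval hx
  exact intervalImg_subset γ (toFun_mem_intervalImg hγ)

lemma invFun_mem_Ico {x : ℝ} (hx : x ∈ Set.Ico T.a T.b) : T.invFun x ∈ Set.Ico T.a T.b := by
  obtain ⟨γ, hγ⟩ := exists_intervalImg hx
  exact interval_subset γ (invFun_mem_interval hγ)

lemma invFun_toFun {x : ℝ} (hx : x ∈ Set.Ico T.a T.b) : T.invFun (T.toFun x) = x := by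
  obtain ⟨γ, hγ⟩ := exists_interval hx
  rw [toFun_apply hγ, invFun_apply (by rw [← toFun_apply hγ]; exact toFun_mem_intervalImg hγ)]
  ring

lemma toFun_invFun {x : ℝ} (hx : x ∈ Set.Ico T.a T.b) : T.toFun (T.invFun x) = x := by
  obtain ⟨γ, hγ⟩ := exists_intervalImg hx
  rw [invFun_apply hγ, toFun_apply (by rw [← invFun_apply hγ]; exact invFun_mem_interval hγ)]
  ring

lemma toFun_lep (γ : Fin T.d) : T.toFun (T.lep γ) = T.lepImg γ := by
  rw [toFun_apply (lep_mem γ)]; ring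

lemma invFun_lepImg (γ : Fin T.d) : T.invFun (T.lepImg γ) = T.lep γ := by
  rw [invFun_apply (lepImg_mem γ)]; ring

lemma lep_mem_Ico (γ : Fin T.d) : T.lep γ ∈ Set.Ico T.a T.b :=
  interval_subset γ (lep_mem γ)

end IET
namespace IET

variable {T : IET}

/-- The key symmetry identity: `lepImg γ = a + b - (lep γ + len γ)`. -/
lemma lepImg_symm (hsymm : T.IsSymm) (γ : Fin T.d) :
    T.lepImg γ = T.a + T.b - (T.lep γ + T.len γ) := by
  have hfil : Finset.univ.filter (fun β => T.perm1 β < T.perm1 γ) =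
      Finset.univ.filter (fun β => (T.perm0 γ : ℕ) < (T.perm0 β : ℕ)) := by
    ext β
    simp only [Finset.mem_filter, Finset.mem_univ, true_and, Fin.lt_def]
    have hb := hsymm β
    have hg := hsymm γ
    omega
  have hins : Finset.univ.filter (fun β => ¬ ((T.perm0 β : ℕ) < (T.perm0 γ : ℕ))) =
      insert γ (Finset.univ.filter (fun β => (T.perm0 γ : ℕ) < (T.perm0 β : ℕ))) := by
    ext β
    simp only [Finset.mem_filter, Finset.mem_univ, true_and, Finset.mem_insert]
    constructor
    · intro h
      rcases Nat.lt_or_ge (T.perm0 γ : ℕ) (T.perm0 β : ℕ) with h1 | h1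
      · exact Or.inr h1
      · left
        have : (T.perm0 β : ℕ) = (T.perm0 γ : ℕ) := by omega
        exact T.perm0.injective (Fin.ext this)
    · rintro (rfl | h) <;> omega
  have hsplit := Finset.sum_filter_add_sum_filter_not Finset.univ
    (fun β => (T.perm0 β : ℕ) < (T.perm0 γ : ℕ)) T.len
  rw [hins, Finset.sum_insert (by simp)] at hsplit
  have hlep : T.lep γ = T.a + ∑ β ∈ Finset.univ.filter
      (fun β => (T.perm0 β : ℕ) < (T.perm0 γ : ℕ)), T.len β := by
    unfold lep
    congr 1
  have hImg : T.lepImg γ = T.a + ∑ β ∈ Finset.univ.filter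
      (fun β => (T.perm0 γ : ℕ) < (T.perm0 β : ℕ)), T.len β := by
    unfold lepImg
    rw [hfil]
  have htot := T.len_sum
  rw [hImg]
  linarith [hsplit, hlep, htot]

/-- Predecessor interval: if `π₀ β ≠ 0` there is `β⁻` with `lep β⁻ + len β⁻ = lep β`. -/
lemma exists_pred (β : Fin T.d) (h : (T.perm0 β : ℕ) ≠ 0) :
    ∃ βm : Fin T.d, T.lep βm + T.len βm = T.lep β := by
  have hlt : (T.perm0 β : ℕ) - 1 < T.d := by
    have := (T.perm0 β).isLt; omega
  refine ⟨T.perm0.symm ⟨(T.perm0 β : ℕ) - 1, hlt⟩, ?_⟩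
  rw [lep_add_len_eq, lep_eq_sP]
  congr 1
  simp
  omega

/-- Successor interval: if `π₁ α ≠ 0` (with symmetry) there is `α⁺` with
`lep α⁺ = lep α + len α`. -/
lemma exists_succ (hsymm : T.IsSymm) (α : Fin T.d) (h : (T.perm1 α : ℕ) ≠ 0) :
    ∃ ap : Fin T.d, T.lep ap = T.lep α + T.len α := by
  have hlt : (T.perm0 α : ℕ) + 1 < T.d := by
    have := hsymm α; omega
  refine ⟨T.perm0.symm ⟨(T.perm0 α : ℕ) + 1, hlt⟩, ?_⟩
  rw [lep_add_len_eq, lep_eq_sP]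
  congr 1
  simp

end IET
namespace IET

variable {T : IET}

/-- Cleanup of a connection: a connection whose interior points are not left endpoints. -/
lemma conn_cleanup (hsymm : T.IsSymm)
    (hconn : ∃ s, T.IsConnection s ∧ ∀ σ : Option (Fin T.d), T.centerOpt σ ∉ s) :
    ∃ (X : ℕ → ℝ) (n : ℕ) (β α : Fin T.d),
      1 ≤ n ∧
      (∀ k, X (k + 1) = T.invFun (X k)) ∧
      X 0 = T.lep β ∧ (T.perm0 β : ℕ) ≠ 0 ∧
      X n = T.lep α ∧ (T.perm1 α : ℕ) ≠ 0 ∧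
      (∀ k, 0 < k → k < n → ∀ γ : Fin T.d, X k ≠ T.lep γ) ∧
      (∀ k, k ≤ n → ∀ σ : Option (Fin T.d), X k ≠ T.centerOpt σ) := by
  classical
  obtain ⟨s, ⟨β₀, α₀, n₀, h0β, h0α, h01, h0eq, hseq⟩, hcent⟩ := hconn
  have hxs : ∀ k, k ≤ n₀ → T.invFun^[k] (T.lep β₀) ∈ s := by
    intro k hk
    rw [hseq]
    exact ⟨k, hk, rfl⟩
  have hd2 : 2 ≤ T.d := by
    have h1 := (T.perm0 β₀).isLt
    omega
  have hPex : ∃ j, 1 ≤ j ∧ j ≤ n₀ ∧ ∃ γ : Fin T.d, (T.perm1 γ : ℕ) ≠ 0 ∧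
      T.invFun^[j] (T.lep β₀) = T.lep γ := ⟨n₀, h01, le_refl _, α₀, h0α, h0eq⟩
  obtain ⟨j₁, hPj₁, hj₁min⟩ : ∃ j₁, (1 ≤ j₁ ∧ j₁ ≤ n₀ ∧ ∃ γ : Fin T.d,
      (T.perm1 γ : ℕ) ≠ 0 ∧ T.invFun^[j₁] (T.lep β₀) = T.lep γ) ∧
      ∀ m, m < j₁ → ¬ (1 ≤ m ∧ m ≤ n₀ ∧ ∃ γ : Fin T.d, (T.perm1 γ : ℕ) ≠ 0 ∧
        T.invFun^[m] (T.lep β₀) = T.lep γ) :=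
    ⟨Nat.find hPex, Nat.find_spec hPex, fun m hm => Nat.find_min hPex hm⟩
  obtain ⟨hj1ge, hj1le, α, hα0, hαeq⟩ := hPj₁
  have hQ0 : ∃ γ : Fin T.d, (T.perm0 γ : ℕ) ≠ 0 ∧ T.invFun^[0] (T.lep β₀) = T.lep γ :=
    ⟨β₀, h0β, by simp⟩
  obtain ⟨i₁, hQi₁, hi₁le, hi₁max⟩ : ∃ i₁, (∃ γ : Fin T.d, (T.perm0 γ : ℕ) ≠ 0 ∧
      T.invFun^[i₁] (T.lep β₀) = T.lep γ) ∧ i₁ ≤ j₁ - 1 ∧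
      ∀ m, i₁ < m → m ≤ j₁ - 1 → ¬ (∃ γ : Fin T.d, (T.perm0 γ : ℕ) ≠ 0 ∧
        T.invFun^[m] (T.lep β₀) = T.lep γ) :=
    ⟨Nat.findGreatest (fun m => ∃ γ : Fin T.d, (T.perm0 γ : ℕ) ≠ 0 ∧
        T.invFun^[m] (T.lep β₀) = T.lep γ) (j₁ - 1),
      Nat.findGreatest_spec (P := fun m => ∃ γ : Fin T.d, (T.perm0 γ : ℕ) ≠ 0 ∧
        T.invFun^[m] (T.lep β₀) = T.lep γ) (Nat.zero_le _) hQ0,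
      Nat.findGreatest_le _,
      fun m h1 h2 => Nat.findGreatest_is_greatest (P := fun m => ∃ γ : Fin T.d,
        (T.perm0 γ : ℕ) ≠ 0 ∧ T.invFun^[m] (T.lep β₀) = T.lep γ) h1 h2⟩
  obtain ⟨β, hβ0, hβeq⟩ := hQi₁
  have hi₁lt : i₁ < j₁ := by omega
  refine ⟨fun k => T.invFun^[i₁ + k] (T.lep β₀), j₁ - i₁, β, α, by omega, ?_, ?_, hβ0, ?_,
    hα0, ?_, ?_⟩
  · intro k
    show T.invFun^[i₁ + (k + 1)] (T.lep β₀) = T.invFun (T.invFun^[i₁ + k] (T.lep β₀))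
    have h : i₁ + (k + 1) = (i₁ + k) + 1 := by omega
    rw [h, Function.iterate_succ_apply']
  · show T.invFun^[i₁ + 0] (T.lep β₀) = T.lep β
    simpa using hβeq
  · show T.invFun^[i₁ + (j₁ - i₁)] (T.lep β₀) = T.lep α
    have h : i₁ + (j₁ - i₁) = j₁ := by omega
    rw [h]
    exact hαeq
  · intro k hk0 hkn γ hkγ
    simp only at hkγ
    rcases Nat.eq_zero_or_pos ((T.perm1 γ : ℕ)) with hzero | hpos
    · have hγ0 : (T.perm0 γ : ℕ) ≠ 0 := by
        have := hsymm γ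
        omega
      exact hi₁max (i₁ + k) (by omega) (by omega) ⟨γ, hγ0, hkγ⟩
    · exact hj₁min (i₁ + k) (by omega) ⟨by omega, by omega, γ, by omega, hkγ⟩
  · intro k hk σ hkc
    simp only at hkc
    exact hcent σ (hkc ▸ hxs (i₁ + k) (by omega))

end IET
namespace IET

variable {T : IET}

/-- Data of a cleaned-up connection. -/
structure ConnData (T : IET) where
  X : ℕ → ℝ
  n : ℕ
  β : Fin T.d
  α : Fin T.d
  hn : 1 ≤ n
  hstep : ∀ k, X (k + 1) = T.invFun (X k)
  hX0 : X 0 = T.lep β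
  hβ : (T.perm0 β : ℕ) ≠ 0
  hXn : X n = T.lep α
  hα : (T.perm1 α : ℕ) ≠ 0
  hint : ∀ k, 0 < k → k < n → ∀ γ : Fin T.d, X k ≠ T.lep γ
  hcen : ∀ k, k ≤ n → ∀ σ : Option (Fin T.d), X k ≠ T.centerOpt σ

namespace ConnData

variable (C : ConnData T)

lemma mem_Ico : ∀ k, C.X k ∈ Set.Ico T.a T.b := by
  intro k
  induction k with
  | zero => rw [C.hX0]; exact lep_mem_Ico C.β
  | succ k ih => rw [C.hstep]; exact invFun_mem_Ico ih

lemma toFun_X (k : ℕ) : T.toFun (C.X (k + 1)) = C.X k := by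
  rw [C.hstep]
  exact toFun_invFun (C.mem_Ico k)

lemma a_lt_lep {γ : Fin T.d} (h : (T.perm0 γ : ℕ) ≠ 0) : T.a < T.lep γ := by
  have hd0 : 0 < T.d := T.hd
  set γ₀ := T.perm0.symm ⟨0, hd0⟩ with hγ₀
  have h0 : (T.perm0 γ₀ : ℕ) = 0 := by simp [hγ₀]
  have h1 : T.sP T.perm0 1 = T.sP T.perm0 0 + T.len γ₀ := by
    have := sP_succ T.perm0 γ₀
    rwa [h0] at this
  have h2 : T.sP T.perm0 1 ≤ T.sP T.perm0 (T.perm0 γ : ℕ) := sP_mono _ (by omega)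
  rw [lep_eq_sP]
  rw [sP_zero] at h1
  have := T.len_pos γ₀
  linarith

lemma lep_zero_eq_a : T.lep (T.perm0.symm ⟨0, T.hd⟩) = T.a := by
  rw [lep_eq_sP]
  have h0 : (T.perm0 (T.perm0.symm ⟨0, T.hd⟩) : ℕ) = 0 := by simp
  rw [h0, sP_zero]

lemma X_ne_a {k : ℕ} (hk : k < C.n) : C.X k ≠ T.a := by
  rcases Nat.eq_zero_or_pos k with rfl | hpos
  · rw [C.hX0]
    exact ne_of_gt (a_lt_lep C.hβ)
  · intro h
    exact C.hint k hpos hk (T.perm0.symm ⟨0, T.hd⟩) (by rw [h, lep_zero_eq_a])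

/-- The finite set of connection points (without the terminal one). -/
noncomputable def Wx : Finset ℝ := (Finset.range C.n).image C.X

/-- Its mirror image. -/
noncomputable def Wy : Finset ℝ := C.Wx.image T.refl

/-- The symmetric difference: the "wall" set. -/
noncomputable def W : Finset ℝ := (C.Wx ∪ C.Wy) \ (C.Wx ∩ C.Wy)

lemma mem_Wx {z : ℝ} : z ∈ C.Wx ↔ ∃ k, k < C.n ∧ C.X k = z := by
  unfold Wx
  simp [Finset.mem_image]

lemma refl_refl (t : ℝ) : T.refl (T.refl t) = t := by
  unfold refl
  ring

lemma refl_inj : Function.Injective T.refl := by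
  intro u v h
  unfold refl at h
  linarith

lemma mem_Wy {z : ℝ} : z ∈ C.Wy ↔ ∃ k, k < C.n ∧ T.refl (C.X k) = z := by
  unfold Wy
  simp only [Finset.mem_image, mem_Wx]
  constructor
  · rintro ⟨u, ⟨k, hk, rfl⟩, rfl⟩
    exact ⟨k, hk, rfl⟩
  · rintro ⟨k, hk, rfl⟩
    exact ⟨C.X k, ⟨k, hk, rfl⟩, rfl⟩

lemma mem_Wy' {z : ℝ} : z ∈ C.Wy ↔ T.refl z ∈ C.Wx := by
  rw [mem_Wy, mem_Wx]
  constructor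
  · rintro ⟨k, hk, rfl⟩
    rw [refl_refl]
    exact ⟨k, hk, rfl⟩
  · rintro ⟨k, hk, hkz⟩
    exact ⟨k, hk, by rw [hkz, refl_refl]⟩

lemma mem_Wx' {z : ℝ} : z ∈ C.Wx ↔ T.refl z ∈ C.Wy := by
  rw [mem_Wy' (C := C), refl_refl]

lemma mem_W {z : ℝ} : z ∈ C.W ↔ ((z ∈ C.Wx ∧ z ∉ C.Wy) ∨ (z ∈ C.Wy ∧ z ∉ C.Wx)) := by
  unfold W
  simp only [Finset.mem_sdiff, Finset.mem_union, Finset.mem_inter]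
  tauto

lemma refl_mem_W {z : ℝ} : T.refl z ∈ C.W ↔ z ∈ C.W := by
  rw [mem_W, mem_W, ← mem_Wx' (C := C), ← mem_Wy' (C := C)]
  rw [mem_Wx' (C := C) (z := z), mem_Wy' (C := C) (z := z)]
  tauto

end ConnData

end IET
namespace IET

variable {T : IET}

/-- Mirror dynamics: `T ∘ 𝓘 = 𝓘 ∘ T⁻¹` away from image endpoints. -/
lemma toFun_refl (hsymm : T.IsSymm) {t : ℝ} (ht : t ∈ Set.Ico T.a T.b)
    (hnot : ∀ γ : Fin T.d, T.invFun t ≠ T.lep γ) :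
    T.toFun (T.refl t) = T.refl (T.invFun t) := by
  obtain ⟨γ, hγ⟩ := exists_intervalImg ht
  have hne : t ≠ T.lepImg γ := by
    intro h
    exact hnot γ (by rw [h, invFun_lepImg])
  have hbounds : T.lepImg γ < t ∧ t < T.lepImg γ + T.len γ := by
    rw [intervalImg, Set.mem_Ico] at hγ
    exact ⟨lt_of_le_of_ne hγ.1 (Ne.symm hne), hγ.2⟩
  have hsy := lepImg_symm hsymm γ
  have hrefl_mem : T.refl t ∈ T.interval γ := by
    rw [mem_interval_iff]
    unfold refl
    constructor
    · linarith [hbounds.2]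
    · linarith [hbounds.1]
  rw [toFun_apply hrefl_mem, invFun_apply hγ]
  unfold refl
  ring

namespace ConnData

variable (C : ConnData T)

lemma refl_step (hsymm : T.IsSymm) {k : ℕ} (hk : k + 1 < C.n) :
    T.toFun (T.refl (C.X k)) = T.refl (C.X (k + 1)) := by
  rw [C.hstep]
  exact toFun_refl hsymm (C.mem_Ico k)
    (fun γ h => C.hint (k + 1) (by omega) hk γ (by rw [C.hstep]; exact h))

lemma refl_X_mem_Ico {k : ℕ} (hk : k < C.n) : T.refl (C.X k) ∈ Set.Ico T.a T.b := by
  have h1 := C.mem_Ico k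
  have h2 := C.X_ne_a hk
  rw [Set.mem_Ico] at h1 ⊢
  unfold refl
  constructor
  · linarith [h1.2]
  · have : T.a < C.X k := lt_of_le_of_ne h1.1 (Ne.symm h2)
    linarith

/-- The last mirror point is a left endpoint. -/
lemma refl_X_last (hsymm : T.IsSymm) : ∃ γ : Fin T.d, T.refl (C.X (C.n - 1)) = T.lep γ := by
  obtain ⟨ap, hap⟩ := exists_succ hsymm C.α C.hα
  refine ⟨ap, ?_⟩
  have h1 : C.X (C.n - 1) = T.lepImg C.α := by
    have h2 : T.toFun (C.X ((C.n - 1) + 1)) = C.X (C.n - 1) := C.toFun_X (C.n - 1)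
    have h3 : (C.n - 1) + 1 = C.n := by have := C.hn; omega
    rw [h3, C.hXn, toFun_lep] at h2
    exact h2.symm
  rw [h1, hap]
  have := lepImg_symm hsymm C.α
  unfold refl
  linarith

/-- The first mirror point is the image of a left endpoint. -/
lemma refl_X_zero (hsymm : T.IsSymm) :
    ∃ γ : Fin T.d, T.refl (C.X 0) = T.lepImg γ := by
  obtain ⟨bm, hbm⟩ := exists_pred C.β C.hβ
  refine ⟨bm, ?_⟩
  rw [C.hX0]
  have := lepImg_symm hsymm bm
  unfold refl
  linarith

/-- Invariance of `Wx` off left endpoints. -/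
lemma mem_Wx_iff (ht : t ∈ Set.Ico T.a T.b) (hL : ∀ γ : Fin T.d, t ≠ T.lep γ) :
    t ∈ C.Wx ↔ T.toFun t ∈ C.Wx := by
  rw [mem_Wx, mem_Wx]
  constructor
  · rintro ⟨k, hk, rfl⟩
    rcases Nat.eq_zero_or_pos k with rfl | hpos
    · exact absurd C.hX0 (hL C.β)
    · refine ⟨k - 1, by omega, ?_⟩
      have h : (k - 1) + 1 = k := by omega
      rw [← C.toFun_X (k - 1), h]
  · rintro ⟨j, hj, hjt⟩
    have h1 : t = C.X (j + 1) := by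
      rw [C.hstep, hjt, invFun_toFun ht]
    rcases Nat.lt_or_ge (j + 1) C.n with h2 | h2
    · exact ⟨j + 1, h2, h1.symm⟩
    · exfalso
      have h3 : j + 1 = C.n := by omega
      rw [h3, C.hXn] at h1
      exact hL C.α h1

/-- Invariance of `Wy` off left endpoints. -/
lemma mem_Wy_iff (hsymm : T.IsSymm) (ht : t ∈ Set.Ico T.a T.b)
    (hL : ∀ γ : Fin T.d, t ≠ T.lep γ) :
    t ∈ C.Wy ↔ T.toFun t ∈ C.Wy := by
  rw [mem_Wy, mem_Wy]
  constructor
  · rintro ⟨k, hk, rfl⟩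
    rcases Nat.lt_or_ge (k + 1) C.n with h2 | h2
    · exact ⟨k + 1, h2, (C.refl_step hsymm h2).symm⟩
    · exfalso
      have h3 : k = C.n - 1 := by omega
      obtain ⟨γ, hγ⟩ := C.refl_X_last hsymm
      rw [← h3] at hγ
      exact hL γ hγ
  · rintro ⟨j, hj, hjt⟩
    rcases Nat.eq_zero_or_pos j with rfl | hpos
    · exfalso
      obtain ⟨γ, hγ⟩ := C.refl_X_zero hsymm
      have h1 : t = T.lep γ := by
        rw [← invFun_toFun ht, ← hjt, hγ, invFun_lepImg]
      exact hL γ h1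
    · refine ⟨j - 1, by omega, ?_⟩
      have hj1 : (j - 1) + 1 = j := by omega
      have h2 := C.refl_step hsymm (show (j - 1) + 1 < C.n by omega)
      rw [hj1] at h2
      have h3 : t = T.refl (C.X (j - 1)) := by
        rw [← invFun_toFun ht, ← hjt, ← h2,
          invFun_toFun (C.refl_X_mem_Ico (by omega))]
      exact h3.symm

/-- Invariance of `W` off left endpoints (fact (A)). -/
lemma mem_W_iff (hsymm : T.IsSymm) (ht : t ∈ Set.Ico T.a T.b)
    (hL : ∀ γ : Fin T.d, t ≠ T.lep γ) :
    t ∈ C.W ↔ T.toFun t ∈ C.W := by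
  rw [mem_W, mem_W, ← C.mem_Wx_iff ht hL, ← C.mem_Wy_iff hsymm ht hL]

end ConnData

end IET
namespace IET

namespace ConnData

variable {T : IET} (C : ConnData T)

lemma X_ne_center {k : ℕ} (hk : k ≤ C.n) (γ : Fin T.d) : C.X k ≠ T.center γ :=
  C.hcen k hk (some γ)

lemma X_ne_centerHalf {k : ℕ} (hk : k ≤ C.n) : C.X k ≠ (T.a + T.b) / 2 :=
  C.hcen k hk none

lemma center_notMem_Wx (γ : Fin T.d) : T.center γ ∉ C.Wx := by
  rw [mem_Wx]
  rintro ⟨k, hk, hkc⟩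
  exact C.X_ne_center (by omega) γ hkc

lemma center_notMem_Wy (hsymm : T.IsSymm) (γ : Fin T.d) : T.center γ ∉ C.Wy := by
  rw [mem_Wy]
  rintro ⟨k, hk, hkc⟩
  have hXk : C.X k = T.lepImg γ + T.len γ / 2 := by
    have h1 : C.X k = T.refl (T.center γ) := by rw [← hkc, refl_refl]
    have h2 := lepImg_symm hsymm γ
    rw [h1]
    unfold refl center
    linarith
  have hmem : C.X k ∈ T.intervalImg γ := by
    rw [intervalImg, Set.mem_Ico, hXk]
    have := T.len_pos γ
    constructor <;> linarith
  have h3 : C.X (k + 1) = T.center γ := by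
    rw [C.hstep, invFun_apply hmem, hXk]
    unfold center
    ring
  exact C.X_ne_center (by omega) γ h3

lemma center_notMem_W (hsymm : T.IsSymm) (γ : Fin T.d) : T.center γ ∉ C.W := by
  rw [mem_W]
  rintro (⟨h, -⟩ | ⟨h, -⟩)
  · exact C.center_notMem_Wx γ h
  · exact C.center_notMem_Wy hsymm γ h

lemma Wx_subset {z : ℝ} (hz : z ∈ C.Wx) : z ∈ Set.Ioo T.a T.b := by
  rw [mem_Wx] at hz
  obtain ⟨k, hk, rfl⟩ := hz
  have h1 := C.mem_Ico k
  have h2 := C.X_ne_a hk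
  rw [Set.mem_Ico] at h1
  exact ⟨lt_of_le_of_ne h1.1 (Ne.symm h2), h1.2⟩

lemma Wy_subset {z : ℝ} (hz : z ∈ C.Wy) : z ∈ Set.Ioo T.a T.b := by
  rw [mem_Wy] at hz
  obtain ⟨k, hk, rfl⟩ := hz
  have h1 := C.mem_Ico k
  have h2 := C.X_ne_a hk
  rw [Set.mem_Ico] at h1
  unfold refl
  constructor
  · linarith [h1.2]
  · have : T.a < C.X k := lt_of_le_of_ne h1.1 (Ne.symm h2)
    linarith

lemma W_subset {z : ℝ} (hz : z ∈ C.W) : z ∈ Set.Ioo T.a T.b := by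
  rw [mem_W] at hz
  rcases hz with ⟨h, -⟩ | ⟨h, -⟩
  · exact C.Wx_subset h
  · exact C.Wy_subset h

lemma even_card_W : Even C.W.card := by
  have h1 : (C.Wx ∩ C.Wy) ⊆ (C.Wx ∪ C.Wy) :=
    le_trans Finset.inter_subset_left Finset.subset_union_left
  have h2 : C.W.card = (C.Wx ∪ C.Wy).card - (C.Wx ∩ C.Wy).card :=
    Finset.card_sdiff_of_subset h1
  have h3 := Finset.card_union_add_card_inter C.Wx C.Wy
  have h4 : C.Wy.card = C.Wx.card := Finset.card_image_of_injective _ (refl_inj (T := T))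
  have h5 : (C.Wx ∩ C.Wy).card ≤ (C.Wx ∪ C.Wy).card := Finset.card_le_card h1
  rw [Nat.even_iff]
  omega

lemma W_nonempty (hsymm : T.IsSymm) : C.W.Nonempty := by
  rw [Finset.nonempty_iff_ne_empty]
  intro hW
  have hWxy : ∀ z, z ∈ C.Wx ↔ z ∈ C.Wy := by
    intro z
    constructor
    · intro h
      by_contra h2
      have : z ∈ C.W := C.mem_W.mpr (Or.inl ⟨h, h2⟩)
      rw [hW] at this
      exact absurd this (Finset.notMem_empty z)
    · intro h
      by_contra h2
      have : z ∈ C.W := C.mem_W.mpr (Or.inr ⟨h, h2⟩)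
      rw [hW] at this
      exact absurd this (Finset.notMem_empty z)
  have h0 : T.refl (C.X 0) ∈ C.Wy := C.mem_Wy.mpr ⟨0, C.hn, rfl⟩
  obtain ⟨j, hjn, hj⟩ := C.mem_Wx.mp ((hWxy _).mpr h0)
  have chain : ∀ k, k ≤ j → T.refl (C.X k) = C.X (j - k) := by
    intro k
    induction k with
    | zero => intro _; simpa using hj.symm
    | succ k ih =>
      intro hk1
      have hk : k ≤ j := by omega
      have prev := ih hk
      have hjk1 : (j - (k + 1)) + 1 = j - k := by omega
      have h2 : C.X (j - (k + 1)) = T.toFun (C.X (j - k)) := by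
        rw [← hjk1, C.toFun_X]
      rw [h2, ← prev, C.refl_step hsymm (by omega)]
  rcases Nat.even_or_odd j with ⟨m, hm⟩ | ⟨m, hm⟩
  · have hmj : m ≤ j := by omega
    have := chain m hmj
    have hjm : j - m = m := by omega
    rw [hjm] at this
    have : C.X m = (T.a + T.b) / 2 := by
      unfold refl at this
      linarith
    exact C.X_ne_centerHalf (by omega) this
  · have hmj : m + 1 ≤ j := by omega
    have hchain := chain (m + 1) hmj
    have hjm : j - (m + 1) = m := by omega
    rw [hjm] at hchain
    have h2 : C.X m = T.toFun (C.X (m + 1)) := (C.toFun_X m).symm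
    obtain ⟨γ, hγ⟩ := exists_interval (C.mem_Ico (m + 1))
    have h3 := toFun_apply hγ
    have h4 := lepImg_symm hsymm γ
    have h5 : C.X (m + 1) = T.center γ := by
      have := hchain
      rw [h2, h3] at this
      unfold refl at this
      unfold center
      linarith
    exact C.X_ne_center (by omega) γ h5

end ConnData

end IET
namespace IET

/-- A finset admitting a fixed-point-free involution has even cardinality. -/
lemma even_card_of_invol (S : Finset ℝ) (f : ℝ → ℝ)
    (hmem : ∀ z ∈ S, f z ∈ S) (hinv : ∀ z ∈ S, f (f z) = z)
    (hne : ∀ z ∈ S, f z ≠ z) : Even S.card := by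
  classical
  induction S using Finset.strongInduction with
  | _ S ih =>
    rcases S.eq_empty_or_nonempty with rfl | ⟨a, ha⟩
    · simp
    · have hfa := hmem a ha
      have hnea := hne a ha
      have hpair : ({a, f a} : Finset ℝ) ⊆ S := by
        intro z hz
        rcases Finset.mem_insert.mp hz with rfl | hz
        · exact ha
        · rw [Finset.mem_singleton] at hz
          rw [hz]; exact hfa
      have hpairc : ({a, f a} : Finset ℝ).card = 2 := Finset.card_pair (Ne.symm hnea)
      have hss : S \ {a, f a} ⊂ S :=
        Finset.sdiff_ssubset hpair ⟨a, Finset.mem_insert_self _ _⟩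
      have hmem' : ∀ z ∈ S \ {a, f a}, f z ∈ S \ {a, f a} := by
        intro z hz
        rw [Finset.mem_sdiff] at hz ⊢
        obtain ⟨hzS, hzp⟩ := hz
        simp only [Finset.mem_insert, Finset.mem_singleton] at hzp
        push_neg at hzp
        refine ⟨hmem z hzS, ?_⟩
        simp only [Finset.mem_insert, Finset.mem_singleton]
        push_neg
        constructor
        · intro h
          exact hzp.2 (by rw [← hinv z hzS, h])
        · intro h
          have : f (f z) = f (f a) := by rw [h]
          rw [hinv z hzS, hinv a ha] at this
          exact hzp.1 this
      have hinv' : ∀ z ∈ S \ {a, f a}, f (f z) = z := fun z hz =>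
        hinv z (Finset.mem_sdiff.mp hz).1
      have hne' : ∀ z ∈ S \ {a, f a}, f z ≠ z := fun z hz =>
        hne z (Finset.mem_sdiff.mp hz).1
      have heven := ih _ hss hmem' hinv' hne'
      have hcard : (S \ {a, f a}).card = S.card - 2 := by
        rw [Finset.card_sdiff_of_subset hpair, hpairc]
      have h2 : 2 ≤ S.card := by
        calc 2 = ({a, f a} : Finset ℝ).card := hpairc.symm
          _ ≤ S.card := Finset.card_le_card hpair
      rw [Nat.even_iff] at heven ⊢
      omega

namespace ConnData

variable {T : IET} (C : ConnData T)

/-- The counting function whose parity is the invariant. -/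
noncomputable def phi (t : ℝ) : ℕ := (C.W.filter (fun z => z ≤ t)).card

lemma phi_refl (u : ℝ) :
    C.phi (T.refl u) + C.phi u = C.W.card + (if u ∈ C.W then 1 else 0) := by
  classical
  have e2 : (C.W.filter (fun z => z ≤ T.refl u)).card
      = (C.W.filter (fun z => u ≤ z)).card := by
    apply Finset.card_bij' (fun z _ => T.refl z) (fun w _ => T.refl w)
    · intro z hz
      rw [Finset.mem_filter] at hz ⊢
      refine ⟨(C.refl_mem_W).mpr hz.1, ?_⟩
      have := hz.2
      unfold refl at this ⊢
      linarith
    · intro w hw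
      rw [Finset.mem_filter] at hw ⊢
      refine ⟨(C.refl_mem_W).mpr hw.1, ?_⟩
      have := hw.2
      unfold refl at this ⊢
      linarith
    · intro z _; exact refl_refl z
    · intro w _; exact refl_refl w
  have e1 := Finset.card_filter_add_card_filter_not
    (s := C.W) (p := fun z => u ≤ z)
  have e3 : C.W.filter (fun z => ¬ u ≤ z) = C.W.filter (fun z => z < u) := by
    apply Finset.filter_congr
    intro z _
    simp [not_le]
  have e4 : C.phi u = (C.W.filter (fun z => z < u)).card + (if u ∈ C.W then 1 else 0) := by
    unfold phi
    have hsplit : C.W.filter (fun z => z ≤ u) =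
        C.W.filter (fun z => z < u) ∪ C.W.filter (fun z => z = u) := by
      ext z
      simp only [Finset.mem_filter, Finset.mem_union]
      constructor
      · rintro ⟨hz, hle⟩
        rcases lt_or_eq_of_le hle with h | h
        · exact Or.inl ⟨hz, h⟩
        · exact Or.inr ⟨hz, h⟩
      · rintro (⟨hz, h⟩ | ⟨hz, h⟩)
        · exact ⟨hz, le_of_lt h⟩
        · exact ⟨hz, le_of_eq h⟩
    have hdisj : Disjoint (C.W.filter (fun z => z < u)) (C.W.filter (fun z => z = u)) := by
      rw [Finset.disjoint_filter]
      intro z _ hlt heq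
      rw [heq] at hlt
      exact lt_irrefl u hlt
    rw [hsplit, Finset.card_union_of_disjoint hdisj, Finset.filter_eq']
    split
    · simp
    · simp
  rw [e3] at e1
  unfold phi at e4 ⊢
  rw [e2, e4]
  omega

lemma phi_between {u v : ℝ} (huv : u ≤ v) :
    C.phi v = C.phi u + (C.W.filter (fun z => u < z ∧ z ≤ v)).card := by
  classical
  unfold phi
  have hsplit : C.W.filter (fun z => z ≤ v) =
      C.W.filter (fun z => z ≤ u) ∪ C.W.filter (fun z => u < z ∧ z ≤ v) := by
    ext z
    simp only [Finset.mem_filter, Finset.mem_union]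
    constructor
    · rintro ⟨hz, hle⟩
      rcases le_or_gt z u with h | h
      · exact Or.inl ⟨hz, h⟩
      · exact Or.inr ⟨hz, h, hle⟩
    · rintro (⟨hz, h⟩ | ⟨hz, h1, h2⟩)
      · exact ⟨hz, le_trans h huv⟩
      · exact ⟨hz, h2⟩
  have hdisj : Disjoint (C.W.filter (fun z => z ≤ u))
      (C.W.filter (fun z => u < z ∧ z ≤ v)) := by
    rw [Finset.disjoint_filter]
    intro z _ hle ⟨hlt, _⟩
    exact absurd hle (not_le.mpr hlt)
  rw [hsplit, Finset.card_union_of_disjoint hdisj]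

lemma count_open_endpoint {u v : ℝ} (huv : u < v) :
    (C.W.filter (fun z => u < z ∧ z ≤ v)).card
      = (C.W.filter (fun z => u < z ∧ z < v)).card + (if v ∈ C.W then 1 else 0) := by
  classical
  have hsplit : C.W.filter (fun z => u < z ∧ z ≤ v) =
      C.W.filter (fun z => u < z ∧ z < v) ∪ C.W.filter (fun z => z = v) := by
    ext z
    simp only [Finset.mem_filter, Finset.mem_union]
    constructor
    · rintro ⟨hz, h1, h2⟩
      rcases lt_or_eq_of_le h2 with h | h
      · exact Or.inl ⟨hz, h1, h⟩
      · exact Or.inr ⟨hz, h⟩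
    · rintro (⟨hz, h1, h2⟩ | ⟨hz, h⟩)
      · exact ⟨hz, h1, le_of_lt h2⟩
      · subst h; exact ⟨hz, huv, le_refl _⟩
  have hdisj : Disjoint (C.W.filter (fun z => u < z ∧ z < v))
      (C.W.filter (fun z => z = v)) := by
    rw [Finset.disjoint_filter]
    intro z _ hmem heq
    rw [heq] at hmem
    exact lt_irrefl v hmem.2
  rw [hsplit, Finset.card_union_of_disjoint hdisj, Finset.filter_eq']
  split
  · simp
  · simp

end ConnData

end IET
namespace IET

namespace ConnData

variable {T : IET} (C : ConnData T)

/-- Reflection invariance of `W` inside each exchanged interval (fact (A')). -/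
lemma mem_W_reflI (hsymm : T.IsSymm) {γ : Fin T.d} {z : ℝ}
    (h1 : T.lep γ < z) (h2 : z < T.lep γ + T.len γ) :
    z ∈ C.W ↔ (2 * T.lep γ + T.len γ - z) ∈ C.W := by
  have hγ : z ∈ T.interval γ := mem_interval_iff.mpr ⟨le_of_lt h1, h2⟩
  have hIco : z ∈ Set.Ico T.a T.b := interval_subset γ hγ
  have hL : ∀ γ' : Fin T.d, z ≠ T.lep γ' := by
    intro γ' heq
    rcases le_or_gt ((T.perm0 γ' : ℕ)) ((T.perm0 γ : ℕ)) with h | h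
    · have : T.lep γ' ≤ T.lep γ := by
        rw [lep_eq_sP, lep_eq_sP]
        exact sP_mono _ h
      rw [heq] at h1
      linarith
    · have : T.lep γ + T.len γ ≤ T.lep γ' := by
        rw [lep_add_len_eq, lep_eq_sP]
        exact sP_mono _ h
      rw [heq] at h2
      linarith
  have key := C.mem_W_iff hsymm hIco hL
  have htR : T.refl (T.toFun z) = 2 * T.lep γ + T.len γ - z := by
    rw [toFun_apply hγ, lepImg_symm hsymm γ]
    unfold refl
    ring
  rw [key, ← C.refl_mem_W (z := T.toFun z), htR]

/-- The pairing argument: points of `W` strictly between symmetric positions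
inside an interval come in pairs. -/
lemma even_count_open (hsymm : T.IsSymm) {γ : Fin T.d} {u v : ℝ}
    (hu : T.lep γ ≤ u) (hsum : u + v = 2 * T.lep γ + T.len γ) (huv : u < v) :
    Even ((C.W.filter (fun z => u < z ∧ z < v)).card) := by
  apply even_card_of_invol _ (fun z => 2 * T.lep γ + T.len γ - z)
  · intro z hz
    rw [Finset.mem_filter] at hz ⊢
    obtain ⟨hzW, hz1, hz2⟩ := hz
    have hzl : T.lep γ < z := lt_of_le_of_lt hu hz1
    have hzr : z < T.lep γ + T.len γ := by linarith
    exact ⟨(C.mem_W_reflI hsymm hzl hzr).mp hzW, by linarith, by linarith⟩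
  · intro z _
    ring
  · intro z hz hfix
    rw [Finset.mem_filter] at hz
    apply C.center_notMem_W hsymm γ
    have hcz : z = T.center γ := by
      unfold center
      have hfix' : 2 * T.lep γ + T.len γ - z = z := hfix
      linarith
    rw [← hcz]
    exact hz.1

/-- The parity of `phi` is invariant under `T`. -/
lemma even_phi_toFun (hsymm : T.IsSymm) (t : ℝ) :
    Even (C.phi (T.toFun t)) ↔ Even (C.phi t) := by
  by_cases ht : t ∈ Set.Ico T.a T.b
  swap
  · rw [toFun_eq_self ht]
  obtain ⟨γ, hγ⟩ := exists_interval ht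
  have hγ' := mem_interval_iff.mp hγ
  have hlen := T.len_pos γ
  set u := 2 * T.lep γ + T.len γ - t with hu
  have hTt : T.toFun t = T.refl u := by
    rw [toFun_apply hγ, lepImg_symm hsymm γ, hu]
    unfold refl
    ring
  have hrefl := C.phi_refl u
  rw [← hTt] at hrefl
  have hcard := C.even_card_W
  rw [Nat.even_iff] at hcard
  rw [Nat.even_iff, Nat.even_iff]
  rcases lt_trichotomy t u with hlt | heq | hgt
  · have hb := C.phi_between (le_of_lt hlt)
    have hsp := C.count_open_endpoint hlt
    have hev := C.even_count_open hsymm (γ := γ) hγ'.1 (by rw [hu]; ring) hlt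
    rw [Nat.even_iff] at hev
    by_cases hW : u ∈ C.W
    · rw [if_pos hW] at hrefl hsp
      omega
    · rw [if_neg hW] at hrefl hsp
      omega
  · have h2t : t + t = 2 * T.lep γ + T.len γ := by
      have h' : u = 2 * T.lep γ + T.len γ - t := hu
      rw [← heq] at h'
      linarith
    have hc : t = T.center γ := by
      unfold center
      linarith
    have hW : u ∉ C.W := by
      rw [← heq, hc]
      exact C.center_notMem_W hsymm γ
    rw [if_neg hW, ← heq] at hrefl
    omega
  · have hul : T.lep γ < u := by
      rw [hu]
      linarith [hγ'.2]
    have hb := C.phi_between (le_of_lt hgt)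
    have hsp := C.count_open_endpoint hgt
    have hev := C.even_count_open hsymm (γ := γ) (le_of_lt hul)
      (by rw [hu]; ring) hgt
    rw [Nat.even_iff] at hev
    have hiff : t ∈ C.W ↔ u ∈ C.W := by
      have h2 : t < T.lep γ + T.len γ := hγ'.2
      have h1 : T.lep γ < t := lt_trans hul hgt
      have := C.mem_W_reflI hsymm h1 h2
      rw [← hu] at this
      exact this
    by_cases hW : t ∈ C.W
    · rw [if_pos hW] at hsp
      rw [if_pos (hiff.mp hW)] at hrefl
      omega
    · rw [if_neg hW] at hsp
      rw [if_neg (fun h => hW (hiff.mpr h))] at hrefl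
      omega

end ConnData

end IET
/-- a symmetric IET having a connection disjoint from
`{c_α | α ∈ 𝒜 ∪ {1/2}}` is not ergodic. -/
theorem stmt17 (T : IET) (hsymm : T.IsSymm)
    (hconn : ∃ s, T.IsConnection s ∧ ∀ σ : Option (Fin T.d), T.centerOpt σ ∉ s) :
    ¬ Ergodic T.toFun (volume.restrict (Set.Ico T.a T.b)) := by
  classical
  intro hE
  obtain ⟨X, n, β, α, hn, hstep, hX0, hβ, hXn, hα, hint, hcen⟩ :=
    IET.conn_cleanup hsymm hconn
  set C : IET.ConnData T := ⟨X, n, β, α, hn, hstep, hX0, hβ, hXn, hα, hint, hcen⟩ with hC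
  set f : ℝ → ℕ := fun t => (C.W.filter (fun z => z ≤ t)).card with hf
  have hfphi : ∀ t, f t = C.phi t := fun t => rfl
  set A : Set ℝ := f ⁻¹' {k | Even k} with hA0
  have hfm : Measurable f := by
    have hrepr : f = fun t => ∑ z ∈ C.W, if z ≤ t then 1 else 0 := by
      funext t
      exact Finset.card_filter _ _
    rw [hrepr]
    apply Finset.measurable_sum
    intro z _
    exact Measurable.ite (measurableSet_le measurable_const measurable_id)
      measurable_const measurable_const
  have hA : MeasurableSet A := hfm (MeasurableSet.of_discrete)
  have hinv : T.toFun ⁻¹' A = A := by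
    ext t
    simp only [hA0, Set.mem_preimage, Set.mem_setOf_eq, hfphi]
    exact C.even_phi_toFun hsymm t
  have hne : C.W.Nonempty := C.W_nonempty hsymm
  set w₀ : ℝ := C.W.min' hne with hw₀def
  have hw₀W : w₀ ∈ C.W := C.W.min'_mem hne
  have hw₀ab : w₀ ∈ Set.Ioo T.a T.b := C.W_subset hw₀W
  rcases hE.ae_empty_or_univ hA hinv with hcase | hcase
  · -- A is null, but [a, w₀) ⊆ A has positive measure
    have hzero : volume.restrict (Set.Ico T.a T.b) A = 0 :=
      MeasureTheory.ae_eq_empty.mp hcase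
    have hsub : Set.Ico T.a w₀ ⊆ A := by
      intro t ht
      rw [Set.mem_Ico] at ht
      simp only [hA0, Set.mem_preimage, Set.mem_setOf_eq, hf]
      have hfil : C.W.filter (fun z => z ≤ t) = ∅ := by
        apply Finset.filter_false_of_mem
        intro z hz
        have := C.W.min'_le z hz
        rw [← hw₀def] at this
        push_neg
        linarith [ht.2]
      rw [hfil]
      simp
    have hle : volume.restrict (Set.Ico T.a T.b) (Set.Ico T.a w₀) ≤
        volume.restrict (Set.Ico T.a T.b) A := MeasureTheory.measure_mono hsub
    rw [hzero] at hle
    have hcomp : volume.restrict (Set.Ico T.a T.b) (Set.Ico T.a w₀)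
        = ENNReal.ofReal (w₀ - T.a) := by
      rw [MeasureTheory.Measure.restrict_apply measurableSet_Ico]
      have hint : Set.Ico T.a w₀ ∩ Set.Ico T.a T.b = Set.Ico T.a w₀ := by
        apply Set.inter_eq_self_of_subset_left
        exact Set.Ico_subset_Ico_right (le_of_lt hw₀ab.2)
      rw [hint, Real.volume_Ico]
    rw [hcomp] at hle
    have : (0 : ENNReal) < ENNReal.ofReal (w₀ - T.a) :=
      ENNReal.ofReal_pos.mpr (by linarith [hw₀ab.1])
    exact absurd hle (not_le.mpr this)
  · -- A is co-null, but [w₀, m) ⊆ Aᶜ has positive measure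
    have hzero : volume.restrict (Set.Ico T.a T.b) Aᶜ = 0 :=
      MeasureTheory.ae_eq_univ.mp hcase
    set m : ℝ := if h : (C.W.erase w₀).Nonempty then (C.W.erase w₀).min' h else T.b
      with hmdef
    have hw₀m : w₀ < m ∧ m ≤ T.b := by
      rw [hmdef]
      split
      case isTrue h =>
        have hmm := (C.W.erase w₀).min'_mem h
        have h1 : (C.W.erase w₀).min' h ∈ C.W := Finset.mem_of_mem_erase hmm
        have h2 : (C.W.erase w₀).min' h ≠ w₀ := Finset.ne_of_mem_erase hmm
        have h3 := C.W.min'_le _ h1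
        rw [← hw₀def] at h3
        constructor
        · exact lt_of_le_of_ne h3 (Ne.symm h2)
        · exact le_of_lt (C.W_subset h1).2
      case isFalse h =>
        exact ⟨hw₀ab.2, le_refl _⟩
    have hsub : Set.Ico w₀ m ⊆ Aᶜ := by
      intro t ht
      rw [Set.mem_Ico] at ht
      simp only [hA0, Set.mem_compl_iff, Set.mem_preimage, Set.mem_setOf_eq, hf]
      have hfil : C.W.filter (fun z => z ≤ t) = {w₀} := by
        ext z
        simp only [Finset.mem_filter, Finset.mem_singleton]
        constructor
        · rintro ⟨hzW, hzt⟩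
          by_contra hzne
          have hzer : z ∈ C.W.erase w₀ := Finset.mem_erase.mpr ⟨hzne, hzW⟩
          have hner : (C.W.erase w₀).Nonempty := ⟨z, hzer⟩
          have : m ≤ z := by
            rw [hmdef]
            rw [dif_pos hner]
            exact (C.W.erase w₀).min'_le z hzer
          linarith [ht.2]
        · rintro rfl
          exact ⟨hw₀W, ht.1⟩
      rw [hfil]
      simp
    have hle : volume.restrict (Set.Ico T.a T.b) (Set.Ico w₀ m) ≤
        volume.restrict (Set.Ico T.a T.b) Aᶜ := MeasureTheory.measure_mono hsub
    rw [hzero] at hle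
    have hcomp : volume.restrict (Set.Ico T.a T.b) (Set.Ico w₀ m)
        = ENNReal.ofReal (m - w₀) := by
      rw [MeasureTheory.Measure.restrict_apply measurableSet_Ico]
      have hint2 : Set.Ico w₀ m ∩ Set.Ico T.a T.b = Set.Ico w₀ m := by
        apply Set.inter_eq_self_of_subset_left
        intro x hx
        rw [Set.mem_Ico] at hx ⊢
        constructor
        · linarith [hw₀ab.1, hx.1]
        · linarith [hw₀m.2, hx.2]
      rw [hint2, Real.volume_Ico]
    rw [hcomp] at hle
    have : (0 : ENNReal) < ENNReal.ofReal (m - w₀) :=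
      ENNReal.ofReal_pos.mpr (by linarith [hw₀m.1])
    exact absurd hle (not_le.mpr this)
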